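/- arXiv:1701.07369 — 2 statements merged into one kernel-verified Lean document; each statement's English description precedes it below -/
import Mathlib

section
/- For each fixed t ≥ 1 and d ≥ 0, the number of tuples (x₁,…,x_t) of nonzero elements of a finite abelian group Γ satisfying 2x₁ + ⋯ + 2x_t = 0 depends only on d and n, where 2^d is the order of the 2-torsion subgroup of Γ and n = |Γ|/2^d. In particular, if Γ and Γ' are finite abelian groups with |Γ| = |Γ'| and 2-torsion subgroups of the same order, then these counts agree. -/
open Finset

section aux
variable {G : Type*} [AddCommGroup G] [Fintype G] [DecidableEq G]

private def auxP (G : Type*) [AddCommGroup G] [Fintype G] [DecidableEq G] (t : ℕ) : ℕ :=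
  (univ.filter (fun x : Fin t → G => (∀ i, x i ≠ 0) ∧ ∑ i, (x i + x i) = 0)).card

private def auxK (G : Type*) [AddCommGroup G] [Fintype G] [DecidableEq G] : ℕ :=
  (univ.filter (fun a : G => a + a = 0)).card

private lemma card_fiber (c b : G) (hb : b + b = c) :
    (univ.filter (fun a : G => a + a + c = 0)).card = auxK G := by
  unfold auxK
  apply Finset.card_bij' (fun a _ => a + b) (fun a _ => a - b)
  · intro a ha
    simp only [mem_filter, mem_univ, true_and] at *
    rw [add_add_add_comm, hb, ha]
  · intro a ha
    simp only [mem_filter, mem_univ, true_and] at *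
    rw [sub_add_sub_comm, ha, hb, zero_sub, neg_add_cancel]
  · intro a _; abel
  · intro a _; abel

private lemma key (c : G) (hc : ∃ b, b + b = c) :
    (univ.filter (fun a : G => a ≠ 0 ∧ a + a + c = 0)).card
      + (if c = 0 then 1 else 0) = auxK G := by
  obtain ⟨b, hb⟩ := hc
  have hfull := card_fiber c b hb
  by_cases h0 : c = 0
  · subst h0
    have he : univ.filter (fun a : G => a ≠ 0 ∧ a + a + 0 = 0)
        = (univ.filter (fun a : G => a + a + 0 = 0)).erase 0 := by
      ext a; simp [and_comm]
    have hmem : (0 : G) ∈ univ.filter (fun a : G => a + a + 0 = 0) := by simp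
    rw [if_pos rfl, he, Finset.card_erase_of_mem hmem, hfull]
    have : 1 ≤ auxK G := by
      rw [← hfull]; exact Finset.card_pos.2 ⟨0, hmem⟩
    omega
  · rw [if_neg h0, ← hfull]
    have he : univ.filter (fun a : G => a ≠ 0 ∧ a + a + c = 0)
        = univ.filter (fun a : G => a + a + c = 0) := by
      ext a
      simp only [mem_filter, mem_univ, true_and, and_iff_right_iff_imp]
      rintro ha rfl
      simp only [add_zero, zero_add] at ha
      exact h0 ha
    rw [he, add_zero]
end aux

section aux2
variable {G : Type*} [AddCommGroup G] [Fintype G] [DecidableEq G]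

private lemma nonzero_count (t : ℕ) :
    (univ.filter (fun y : Fin t → G => ∀ i, y i ≠ 0)).card = (Fintype.card G - 1) ^ t := by
  have h1 : univ.filter (fun y : Fin t → G => ∀ i, y i ≠ 0)
      = Fintype.piFinset (fun _ : Fin t => univ.filter (fun a : G => a ≠ 0)) := by
    ext y; simp [Fintype.mem_piFinset]
  have h2 : (univ.filter (fun a : G => a ≠ 0)).card = Fintype.card G - 1 := by
    have : univ.filter (fun a : G => a ≠ 0) = Finset.erase univ 0 := by
      ext a; simp [and_comm]
    rw [this, Finset.card_erase_of_mem (mem_univ 0), Finset.card_univ]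
  rw [h1, Fintype.card_piFinset]
  simp [h2]

private lemma auxP_rec (t : ℕ) :
    auxP G (t+1) + auxP G t = auxK G * (Fintype.card G - 1) ^ t := by
  have e1 : auxP G (t+1) = ∑ y : Fin t → G,
      (univ.filter (fun a : G =>
        (a ≠ 0 ∧ ∀ i, y i ≠ 0) ∧ a + a + ∑ i, (y i + y i) = 0)).card := by
    rw [auxP, Finset.card_filter, ← Equiv.sum_comp (Fin.consEquiv (fun _ : Fin (t+1) => G)),
      Fintype.sum_prod_type_right]
    refine Finset.sum_congr rfl fun y _ => ?_
    rw [Finset.card_filter]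
    refine Finset.sum_congr rfl fun a _ => ?_
    congr 1
    simp [Fin.consEquiv, Fin.forall_fin_succ, Fin.sum_univ_succ, add_assoc, and_assoc,
      and_left_comm]
  have e2 : auxP G t = ∑ y : Fin t → G,
      (if ((∀ i, y i ≠ 0) ∧ ∑ i, (y i + y i) = 0) then 1 else 0) := by
    rw [auxP, Finset.card_filter]
  rw [e1, e2, ← Finset.sum_add_distrib]
  have e3 : ∀ y : Fin t → G,
      (univ.filter (fun a : G =>
        (a ≠ 0 ∧ ∀ i, y i ≠ 0) ∧ a + a + ∑ i, (y i + y i) = 0)).card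
      + (if ((∀ i, y i ≠ 0) ∧ ∑ i, (y i + y i) = 0) then 1 else 0)
      = if (∀ i, y i ≠ 0) then auxK G else 0 := by
    intro y
    by_cases h : ∀ i, y i ≠ 0
    · rw [if_pos h]
      have hfe : (univ.filter (fun a : G =>
          (a ≠ 0 ∧ ∀ i, y i ≠ 0) ∧ a + a + ∑ i, (y i + y i) = 0))
          = (univ.filter (fun a : G => a ≠ 0 ∧ a + a + ∑ i, (y i + y i) = 0)) := by
        ext a; simp [h, and_assoc]
      have hif : (if ((∀ i, y i ≠ 0) ∧ ∑ i, (y i + y i) = 0) then 1 else 0)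
          = (if (∑ i, (y i + y i)) = (0:G) then 1 else 0) := by
        simp [h]
      rw [hfe, hif]
      exact key _ ⟨∑ i, y i, by rw [← Finset.sum_add_distrib]⟩
    · rw [if_neg h]
      have hfe : (univ.filter (fun a : G =>
          (a ≠ 0 ∧ ∀ i, y i ≠ 0) ∧ a + a + ∑ i, (y i + y i) = 0)) = ∅ := by
        ext a; simp only [mem_filter, mem_univ, true_and, Finset.notMem_empty, iff_false]
        rintro ⟨⟨-, h2⟩, -⟩; exact h h2
      rw [hfe]
      simp [h]
  rw [Finset.sum_congr rfl fun y _ => e3 y, ← Finset.sum_filter, Finset.sum_const,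
    nonzero_count, smul_eq_mul, mul_comm]

private lemma auxP_zero : auxP G 0 = 1 := by
  simp [auxP]

end aux2

private lemma auxK_eq (G : Type*) [AddCommGroup G] [Fintype G] [DecidableEq G] :
    auxK G = Nat.card {x : G // x + x = 0} := by
  rw [Nat.card_eq_fintype_card, Fintype.card_subtype, auxK]

private lemma auxP_eq (G : Type*) [AddCommGroup G] [Fintype G] [DecidableEq G] (t : ℕ) :
    auxP G t = Nat.card {x : Fin t → G // (∀ i, x i ≠ 0) ∧ ∑ i, (x i + x i) = 0} := by
  rw [Nat.card_eq_fintype_card, Fintype.card_subtype, auxP]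

theorem stmt_8 (Γ Γ' : Type*) [AddCommGroup Γ] [Fintype Γ] [AddCommGroup Γ'] [Fintype Γ']
    (t d : ℕ) (ht : 1 ≤ t)
    (hcard : Fintype.card Γ = Fintype.card Γ')
    (h2 : Nat.card {x : Γ // x + x = 0} = 2 ^ d)
    (h2' : Nat.card {x : Γ' // x + x = 0} = 2 ^ d) :
    Nat.card {x : Fin t → Γ // (∀ i, x i ≠ 0) ∧ ∑ i, (x i + x i) = 0} =
      Nat.card {x : Fin t → Γ' // (∀ i, x i ≠ 0) ∧ ∑ i, (x i + x i) = 0} := by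
  classical
  rw [← auxP_eq, ← auxP_eq]
  have hK : auxK Γ = auxK Γ' := by rw [auxK_eq, auxK_eq, h2, h2']
  have main : ∀ s : ℕ, auxP Γ s = auxP Γ' s := by
    intro s
    induction s with
    | zero => rw [auxP_zero, auxP_zero]
    | succ n ih =>
      have r1 := auxP_rec (G := Γ) n
      have r2 := auxP_rec (G := Γ') n
      rw [hK, hcard, ih] at r1
      omega
  exact main t
end

section
/- For each fixed t ≥ 1 and d ≥ 0, there is a polynomial f with integer coefficients such that for every finite abelian group Γ whose 2-torsion subgroup has order 2^d and |Γ| = 2^d n, the number of tuples (x₁,…,x_t) of nonzero elements with 2x₁ + ⋯ + 2x_t = 0 equals f(n). -/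
set_option maxHeartbeats 1000000

open Finset Polynomial

open scoped Classical in
noncomputable def cnt9 (Γ : Type) [AddCommGroup Γ] [Fintype Γ] (t : ℕ) : ℕ :=
  (Finset.univ.filter fun x : Fin t → Γ =>
    (∀ i, x i ≠ 0) ∧ ∑ i, (x i + x i) = 0).card

noncomputable def fp9 (d : ℕ) : ℕ → Polynomial ℤ
  | 0 => 1
  | t+1 => C ((2:ℤ)^d) * (C ((2:ℤ)^d) * X - 1)^t - fp9 d t

section G
variable {Γ : Type} [AddCommGroup Γ] [Fintype Γ]

open scoped Classical

lemma cardA9 {d : ℕ} (hd : Nat.card {x : Γ // x + x = 0} = 2 ^ d) {a z₀ : Γ}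
    (hz : z₀ + z₀ = a) :
    (Finset.univ.filter fun z : Γ => z + z = a).card = 2 ^ d := by
  have h0 : (Finset.univ.filter fun z : Γ => z + z = 0).card = 2 ^ d := by
    rw [← hd, Nat.card_eq_fintype_card, Fintype.card_subtype]
  rw [← h0]
  apply Finset.card_bij (fun z _ => z - z₀)
  · intro z hz'
    simp only [mem_filter, mem_univ, true_and] at hz' ⊢
    rw [sub_add_sub_comm, hz', hz, sub_self]
  · intro a _ b _ h; simpa using h
  · intro w hw
    simp only [mem_filter, mem_univ, true_and] at hw
    refine ⟨w + z₀, ?_, by simp⟩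
    simp only [mem_filter, mem_univ, true_and]
    rw [add_add_add_comm, hw, hz, zero_add]

lemma cnt9_zero : cnt9 Γ 0 = 1 := by
  unfold cnt9
  rw [Finset.filter_true_of_mem, Finset.card_univ]
  · simp
  · intro x _
    exact ⟨fun i => i.elim0, by simp⟩

lemma card_filter_nonzero (t : ℕ) :
    (Finset.univ.filter fun y : Fin t → Γ => ∀ i, y i ≠ 0).card
      = (Fintype.card Γ - 1) ^ t := by
  rw [← Fintype.card_subtype]
  rw [Fintype.card_congr (Equiv.subtypePiEquivPi (p := fun (_ : Fin t) (b : Γ) => b ≠ 0))]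
  rw [Fintype.card_pi]
  have : Fintype.card {b : Γ // b ≠ 0} = Fintype.card Γ - 1 := by
    rw [Fintype.card_subtype]
    rw [Finset.filter_ne' Finset.univ (0:Γ)]
    rw [Finset.card_erase_of_mem (Finset.mem_univ _), Finset.card_univ]
  simp [this]

lemma peryo {d : ℕ} (hd : Nat.card {x : Γ // x + x = 0} = 2 ^ d) (S w : Γ)
    (hw : w + w = S) :
    (Finset.univ.filter fun z : Γ => z ≠ 0 ∧ (z + z) + S = 0).card
      + (if S = 0 then 1 else 0) = 2 ^ d := by
  have htot : (Finset.univ.filter fun z : Γ => (z + z) + S = 0).card = 2 ^ d := by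
    have : (Finset.univ.filter fun z : Γ => (z + z) + S = 0)
        = (Finset.univ.filter fun z : Γ => z + z = -S) := by
      apply Finset.filter_congr; intro z _; constructor
      · intro h; linear_combination (norm := abel) h
      · intro h; linear_combination (norm := abel) h
    rw [this]
    exact cardA9 hd (z₀ := -w) (by rw [← neg_add, hw])
  have hsplit := Finset.card_filter_add_card_filter_not
    (s := Finset.univ.filter fun z : Γ => (z + z) + S = 0) (p := fun z : Γ => z ≠ 0)
  rw [htot, Finset.filter_filter, Finset.filter_filter] at hsplit
  have heq1 : (Finset.univ.filter fun z : Γ => ((z + z) + S = 0) ∧ z ≠ 0)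
      = (Finset.univ.filter fun z : Γ => z ≠ 0 ∧ (z + z) + S = 0) :=
    Finset.filter_congr (fun z _ => by tauto)
  have heq2 : (Finset.univ.filter fun z : Γ => ((z + z) + S = 0) ∧ ¬z ≠ 0)
      = (Finset.univ.filter fun z : Γ => z = 0 ∧ S = 0) := by
    apply Finset.filter_congr; intro z _
    constructor
    · rintro ⟨h1, h2⟩
      rw [not_not] at h2
      subst h2
      simpa using h1
    · rintro ⟨h1, h2⟩
      subst h1; simp [h2]
  rw [heq1, heq2] at hsplit
  rw [← hsplit]
  congr 1
  by_cases hS : S = 0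
  · rw [if_pos hS]
    have : (Finset.univ.filter fun z : Γ => z = 0 ∧ S = 0)
        = (Finset.univ.filter fun z : Γ => z = 0) :=
      Finset.filter_congr (fun z _ => by simp [hS])
    rw [this]
    have h1 : (Finset.univ.filter fun z : Γ => z = 0) = {0} := by
      ext z; simp
    rw [h1, Finset.card_singleton]
  · rw [if_neg hS]
    have : (Finset.univ.filter fun z : Γ => z = 0 ∧ S = 0) = ∅ := by
      apply Finset.filter_false_of_mem
      intro z _
      tauto
    rw [this, Finset.card_empty]

lemma cnt9_succ {d : ℕ} (hd : Nat.card {x : Γ // x + x = 0} = 2 ^ d) (t : ℕ) :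
    cnt9 Γ (t+1) + cnt9 Γ t = 2 ^ d * (Fintype.card Γ - 1) ^ t := by
  have hstep : cnt9 Γ (t+1) = ∑ y : Fin t → Γ,
      if (∀ i, y i ≠ 0) then
        (Finset.univ.filter fun z : Γ =>
          z ≠ 0 ∧ (z + z) + ∑ i, (y i + y i) = 0).card
      else 0 := by
    unfold cnt9
    rw [Finset.card_filter]
    rw [← Equiv.sum_comp (Fin.consEquiv (fun _ : Fin (t+1) => Γ))
      (fun x : Fin (t+1) → Γ =>
        if ((∀ i, x i ≠ (0:Γ)) ∧ ∑ i, (x i + x i) = 0) then 1 else 0)]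
    simp only [Fin.consEquiv_apply]
    rw [Fintype.sum_prod_type]
    rw [Finset.sum_comm]
    apply Finset.sum_congr rfl
    intro y _
    by_cases hA : ∀ i, y i ≠ 0
    · rw [if_pos hA, Finset.card_filter]
      apply Finset.sum_congr rfl
      intro z _
      congr 1
      simp only [eq_iff_iff]
      rw [Fin.forall_fin_succ, Fin.sum_univ_succ]
      simp [hA]
    · rw [if_neg hA]
      apply Finset.sum_eq_zero
      intro z _
      rw [if_neg]
      rintro ⟨h1, -⟩
      rw [Fin.forall_fin_succ] at h1
      exact hA (by simpa using h1.2)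
  have hct : cnt9 Γ t = ∑ y : Fin t → Γ,
      if (∀ i, y i ≠ 0) then (if (∑ i, (y i + y i)) = (0:Γ) then 1 else 0) else 0 := by
    unfold cnt9
    rw [Finset.card_filter]
    apply Finset.sum_congr rfl
    intro y _
    rw [ite_and]
  rw [hstep, hct, ← Finset.sum_add_distrib]
  have : ∀ y : Fin t → Γ,
      ((if (∀ i, y i ≠ 0) then
        (Finset.univ.filter fun z : Γ =>
          z ≠ 0 ∧ (z + z) + ∑ i, (y i + y i) = 0).card else 0)
      + (if (∀ i, y i ≠ 0) then (if (∑ i, (y i + y i)) = (0:Γ) then 1 else 0) else 0))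
      = if (∀ i, y i ≠ 0) then 2 ^ d else 0 := by
    intro y
    by_cases hA : ∀ i, y i ≠ 0
    · simp only [if_pos hA]
      exact peryo hd (∑ i, (y i + y i)) (∑ i, y i) (by rw [← Finset.sum_add_distrib])
    · simp [hA]
  rw [Finset.sum_congr rfl (fun y _ => this y)]
  rw [← Finset.sum_filter (fun y : Fin t → Γ => ∀ i, y i ≠ 0) (fun _ => 2 ^ d)]
  simp only [Finset.sum_const, smul_eq_mul]
  rw [card_filter_nonzero]
  ring

lemma key9 (d : ℕ) : ∀ (t : ℕ) (Γ : Type) (_ : AddCommGroup Γ) (_ : Fintype Γ) (n : ℕ),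
    Nat.card {x : Γ // x + x = 0} = 2 ^ d →
    Fintype.card Γ = 2 ^ d * n →
    (cnt9 Γ t : ℤ) = (fp9 d t).eval (n : ℤ) := by
  intro t
  induction t with
  | zero =>
    intro Γ iG iF n hd hM
    rw [cnt9_zero]
    simp [fp9]
  | succ t ih =>
    intro Γ iG iF n hd hM
    have hrec := cnt9_succ (Γ := Γ) hd t
    have hpos : 1 ≤ Fintype.card Γ := Fintype.card_pos
    have hcast : ((Fintype.card Γ - 1 : ℕ) : ℤ) = 2 ^ d * (n : ℤ) - 1 := by
      rw [Nat.cast_sub hpos, hM]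
      push_cast
      ring
    have hZ : (cnt9 Γ (t+1) : ℤ) + (cnt9 Γ t : ℤ)
        = 2 ^ d * (((Fintype.card Γ - 1 : ℕ) : ℤ)) ^ t := by
      exact_mod_cast congrArg (Nat.cast : ℕ → ℤ) hrec
    rw [hcast] at hZ
    have hih := ih Γ iG iF n hd hM
    simp only [fp9, eval_sub, eval_mul, eval_pow, eval_C, eval_X, eval_one]
    rw [← hih]
    push_cast
    linarith [hZ]

end G

theorem stmt_9 (t d : ℕ) (ht : 1 ≤ t) :
    ∃ f : Polynomial ℤ,
      ∀ (Γ : Type) (_ : AddCommGroup Γ) (_ : Fintype Γ) (n : ℕ),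
        Nat.card {x : Γ // x + x = 0} = 2 ^ d →
        Fintype.card Γ = 2 ^ d * n →
        (Nat.card {x : Fin t → Γ // (∀ i, x i ≠ 0) ∧ ∑ i, (x i + x i) = 0} : ℤ) =
          f.eval (n : ℤ) := by
  classical
  refine ⟨fp9 d t, ?_⟩
  intro Γ iG iF n hd hM
  have h := key9 d t Γ iG iF n hd hM
  have hcard : Nat.card {x : Fin t → Γ // (∀ i, x i ≠ 0) ∧ ∑ i, (x i + x i) = 0}
      = cnt9 Γ t := by
    rw [Nat.card_eq_fintype_card, Fintype.card_subtype]
    unfold cnt9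
    simp only [Finset.filter_congr_decidable]
  rw [hcard, h]
end
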